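/- Let p ≥ 1, d ≥ 1, K ≥ 2, and let μ_1, …, μ_K be probability measures on ℝ^d with finite p-th moments, with each θ ↦ W_p^p(θ♯μ_i, θ♯μ_j) measurable and σ-integrable on S^{d−1}. Then SMW_p^p(μ_1, …, μ_K; c) ≥ max_{1≤i,j≤K} SW_p^p(μ_i, μ_j), i.e., the sliced multi-marginal Wasserstein cost with the maximal ground metric dominates the largest pairwise sliced Wasserstein cost among the marginals. -/

import Mathlib

open MeasureTheory Metric Real

noncomputable section

/-- `ℝ^d`. -/
abbrev Rd (d : ℕ) := EuclideanSpace ℝ (Fin d)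

/-- The uniform probability measure `σ` on the unit sphere `S^{d-1} ⊂ ℝ^d`,
obtained by normalizing the surface measure coming from the Lebesgue measure. -/
noncomputable def uniformSphere (d : ℕ) :
    Measure (sphere (0 : Rd d) 1) :=
  ((volume : Measure (Rd d)).toSphere Set.univ)⁻¹ • (volume : Measure (Rd d)).toSphere

/-- A measure on `ℝ^d` has finite `p`-th moment. -/
def FiniteMoment {d : ℕ} (p : ℝ) (μ : Measure (Rd d)) : Prop :=
  Integrable (fun x => ‖x‖ ^ p) μ

/-- A measure on `ℝ` has finite `p`-th moment. -/
def FiniteMoment1 (p : ℝ) (ν : Measure ℝ) : Prop :=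
  Integrable (fun x => |x| ^ p) ν

/-- Pushforward `θ♯μ` of `μ` under `x ↦ ⟪θ, x⟫`. -/
def proj {d : ℕ} (θ : sphere (0 : Rd d) 1) (μ : Measure (Rd d)) : Measure ℝ :=
  μ.map (fun x => inner ℝ (θ : Rd d) x)

/-- The set of couplings of two measures on `ℝ`. -/
def Coupling (ν₁ ν₂ : Measure ℝ) : Set (Measure (ℝ × ℝ)) :=
  {γ | IsProbabilityMeasure γ ∧ γ.map Prod.fst = ν₁ ∧ γ.map Prod.snd = ν₂}

/-- One-dimensional `p`-Wasserstein cost `W_p^p`. -/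
def Wpp (p : ℝ) (ν₁ ν₂ : Measure ℝ) : ℝ :=
  sInf ((fun γ : Measure (ℝ × ℝ) => ∫ q, |q.1 - q.2| ^ p ∂γ) '' Coupling ν₁ ν₂)

/-- Sliced `p`-Wasserstein cost `SW_p^p`. -/
def SWpp {d : ℕ} (p : ℝ) (μ₁ μ₂ : Measure (Rd d)) : ℝ :=
  ∫ θ, Wpp p (proj θ μ₁) (proj θ μ₂) ∂(uniformSphere d)

/-- The set of multi-marginal couplings of `K` measures on `ℝ^d`. -/
def MCoupling {d K : ℕ} (μs : Fin K → Measure (Rd d)) : Set (Measure (Fin K → Rd d)) :=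
  {pl | IsProbabilityMeasure pl ∧ ∀ k, pl.map (fun x => x k) = μs k}

/-- The inner multi-marginal transport cost along direction `θ`, with the maximal
ground metric `c(t₁,…,t_K) = max_{i,j} |t_i - t_j|`. -/
def SMWtheta {d K : ℕ} (p : ℝ) (μs : Fin K → Measure (Rd d))
    (θ : sphere (0 : Rd d) 1) : ℝ :=
  sInf ((fun pl : Measure (Fin K → Rd d) =>
      ∫ x, (⨆ i, ⨆ j, |inner ℝ (θ : Rd d) (x i) - inner ℝ (θ : Rd d) (x j)|) ^ p ∂pl)
    '' MCoupling μs)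

/-- Sliced multi-marginal Wasserstein cost `SMW_p^p` with the maximal ground metric. -/
def SMWpp {d K : ℕ} (p : ℝ) (μs : Fin K → Measure (Rd d)) : ℝ :=
  ∫ θ, SMWtheta p μs θ ∂(uniformSphere d)

section Helpers

variable {d K : ℕ}

/-- members of the `Wpp` defining set are nonnegative. -/
private lemma wpp_set_nonneg (p : ℝ) (ν₁ ν₂ : Measure ℝ) :
    ∀ c : ℝ, c ∈ (fun γ : Measure (ℝ × ℝ) => ∫ q, |q.1 - q.2| ^ p ∂γ) '' Coupling ν₁ ν₂ →
      0 ≤ c := by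
  rintro c ⟨γ, _, rfl⟩
  exact integral_nonneg fun q => Real.rpow_nonneg (abs_nonneg _) p

private lemma wpp_nonneg (p : ℝ) (ν₁ ν₂ : Measure ℝ) : 0 ≤ Wpp p ν₁ ν₂ :=
  Real.sInf_nonneg (wpp_set_nonneg p ν₁ ν₂)

private lemma smw_set_nonneg (p : ℝ) (μs : Fin K → Measure (Rd d)) (θ : sphere (0 : Rd d) 1) :
    ∀ c : ℝ, c ∈ (fun pl : Measure (Fin K → Rd d) =>
      ∫ x, (⨆ i, ⨆ j, |(inner ℝ (θ : Rd d) (x i) : ℝ) - inner ℝ (θ : Rd d) (x j)|) ^ p ∂pl)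
      '' MCoupling μs → 0 ≤ c := by
  rintro c ⟨pl, _, rfl⟩
  refine integral_nonneg fun x => Real.rpow_nonneg ?_ p
  rcases isEmpty_or_nonempty (Fin K) with h0 | h0
  · haveI := h0
    rw [Real.iSup_of_isEmpty]
  obtain ⟨i⟩ := h0
  have hb : ∀ i : Fin K, BddAbove (Set.range fun j : Fin K =>
      |(inner ℝ (θ : Rd d) (x i) : ℝ) - inner ℝ (θ : Rd d) (x j)|) :=
    fun i => (Set.finite_range _).bddAbove
  have hb2 : BddAbove (Set.range fun i : Fin K => ⨆ j : Fin K,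
      |(inner ℝ (θ : Rd d) (x i) : ℝ) - inner ℝ (θ : Rd d) (x j)|) :=
    (Set.finite_range _).bddAbove
  exact le_trans (abs_nonneg _) (le_trans (le_ciSup (hb i) i) (le_ciSup hb2 i))

/-- marginal of the product measure. -/
private lemma pi_map_eval (μs : Fin K → Measure (Rd d))
    (hμs : ∀ k, IsProbabilityMeasure (μs k)) (k : Fin K) :
    (Measure.pi μs).map (fun x => x k) = μs k := by
  haveI := hμs
  ext s hs
  rw [Measure.map_apply (measurable_pi_apply k) hs]
  have he : (fun x : Fin K → Rd d => x k) ⁻¹' s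
      = Set.pi Set.univ (Function.update (fun _ => Set.univ) k s) := Set.eval_preimage
  rw [he, Measure.pi_pi]
  rw [Finset.prod_eq_single k]
  · simp
  · intro i _ hik
    simp [Function.update_of_ne hik, measure_univ]
  · intro h; exact absurd (Finset.mem_univ k) h

private lemma pi_mem_mcoupling (μs : Fin K → Measure (Rd d))
    (hμs : ∀ k, IsProbabilityMeasure (μs k)) :
    Measure.pi μs ∈ MCoupling μs := by
  haveI := hμs
  exact ⟨inferInstance, pi_map_eval μs hμs⟩

/-- pointwise bound on the sup, to the power p. -/
private lemma sup_pow_le (p : ℝ) (hp : 1 ≤ p) (hK : 0 < K)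
    (θ : sphere (0 : Rd d) 1) (x : Fin K → Rd d) :
    (⨆ i, ⨆ j, |(inner ℝ (θ : Rd d) (x i) : ℝ) - inner ℝ (θ : Rd d) (x j)|) ^ p
      ≤ 2 ^ p * ∑ k : Fin K, ‖x k‖ ^ p := by
  haveI : Nonempty (Fin K) := Fin.pos_iff_nonempty.mp hK
  have hp0 : (0:ℝ) ≤ p := le_trans zero_le_one hp
  obtain ⟨k₀, hk₀⟩ := Finite.exists_max fun k : Fin K => ‖x k‖
  have habs : ∀ i : Fin K, |inner ℝ (θ : Rd d) (x i)| ≤ ‖x k₀‖ := by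
    intro i
    calc |inner ℝ (θ : Rd d) (x i)| ≤ ‖(θ : Rd d)‖ * ‖x i‖ := abs_real_inner_le_norm _ _
    _ = ‖x i‖ := by rw [norm_eq_of_mem_sphere θ, one_mul]
    _ ≤ ‖x k₀‖ := hk₀ i
  have hsup : (⨆ i, ⨆ j, |(inner ℝ (θ : Rd d) (x i) : ℝ) - inner ℝ (θ : Rd d) (x j)|)
      ≤ 2 * ‖x k₀‖ := by
    refine ciSup_le fun i => ciSup_le fun j => ?_
    calc |(inner ℝ (θ : Rd d) (x i) : ℝ) - inner ℝ (θ : Rd d) (x j)|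
        ≤ |inner ℝ (θ : Rd d) (x i)| + |inner ℝ (θ : Rd d) (x j)| := abs_sub _ _
    _ ≤ ‖x k₀‖ + ‖x k₀‖ := add_le_add (habs i) (habs j)
    _ = 2 * ‖x k₀‖ := by ring
  have hs0 : (0:ℝ) ≤ ⨆ i, ⨆ j, |(inner ℝ (θ : Rd d) (x i) : ℝ) - inner ℝ (θ : Rd d) (x j)| := by
    obtain ⟨i⟩ := (inferInstance : Nonempty (Fin K))
    have hb : ∀ i : Fin K, BddAbove (Set.range fun j : Fin K =>
        |(inner ℝ (θ : Rd d) (x i) : ℝ) - inner ℝ (θ : Rd d) (x j)|) :=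
      fun i => (Set.finite_range _).bddAbove
    have hb2 : BddAbove (Set.range fun i : Fin K => ⨆ j : Fin K,
        |(inner ℝ (θ : Rd d) (x i) : ℝ) - inner ℝ (θ : Rd d) (x j)|) :=
      (Set.finite_range _).bddAbove
    exact le_trans (abs_nonneg _) (le_trans (le_ciSup (hb i) i) (le_ciSup hb2 i))
  calc (⨆ i, ⨆ j, |(inner ℝ (θ : Rd d) (x i) : ℝ) - inner ℝ (θ : Rd d) (x j)|) ^ p
      ≤ (2 * ‖x k₀‖) ^ p := Real.rpow_le_rpow hs0 hsup hp0
  _ = 2 ^ p * ‖x k₀‖ ^ p := Real.mul_rpow (by norm_num) (norm_nonneg _)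
  _ ≤ 2 ^ p * ∑ k : Fin K, ‖x k‖ ^ p := by
      refine mul_le_mul_of_nonneg_left ?_ (Real.rpow_nonneg (by norm_num) p)
      exact Finset.single_le_sum (fun k _ => Real.rpow_nonneg (norm_nonneg _) p)
        (Finset.mem_univ k₀)

/-- measurability of the integrand (in x). -/
private lemma meas_sup (p : ℝ) (hp : 1 ≤ p) (hK : 0 < K) (θ : sphere (0 : Rd d) 1) :
    Measurable (fun x : Fin K → Rd d =>
      (⨆ i, ⨆ j, |(inner ℝ (θ : Rd d) (x i) : ℝ) - inner ℝ (θ : Rd d) (x j)|) ^ p) := by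
  haveI : Nonempty (Fin K) := Fin.pos_iff_nonempty.mp hK
  have hp0 : (0:ℝ) ≤ p := le_trans zero_le_one hp
  have hs : Measurable (fun x : Fin K → Rd d =>
      ⨆ i, ⨆ j, |(inner ℝ (θ : Rd d) (x i) : ℝ) - inner ℝ (θ : Rd d) (x j)|) := by
    have heq : (fun x : Fin K → Rd d =>
        ⨆ i, ⨆ j, |(inner ℝ (θ : Rd d) (x i) : ℝ) - inner ℝ (θ : Rd d) (x j)|)
        = Finset.univ.sup' Finset.univ_nonempty (fun i =>
            Finset.univ.sup' Finset.univ_nonempty (fun j => fun x : Fin K → Rd d =>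
              |(inner ℝ (θ : Rd d) (x i) : ℝ) - inner ℝ (θ : Rd d) (x j)|)) := by
      funext x
      simp only [Finset.sup'_apply]
      simp only [Finset.sup'_univ_eq_ciSup]
    rw [heq]
    refine Finset.measurable_sup' Finset.univ_nonempty fun i _ => ?_
    refine Finset.measurable_sup' Finset.univ_nonempty fun j _ => ?_
    have hmi : ∀ k : Fin K, Measurable fun x : Fin K → Rd d => (inner ℝ (θ : Rd d) (x k) : ℝ) := by
      intro k
      exact (Continuous.inner continuous_const (continuous_apply k)).measurable
    exact ((hmi i).sub (hmi j)).abs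
  exact (Real.continuous_rpow_const hp0).measurable.comp hs

/-- integrability of the integrand against any multi-coupling. -/
private lemma integrable_sup_pow (p : ℝ) (hp : 1 ≤ p) (hK : 0 < K)
    (μs : Fin K → Measure (Rd d)) (hμs : ∀ k, IsProbabilityMeasure (μs k))
    (hμsm : ∀ k, FiniteMoment p (μs k)) (θ : sphere (0 : Rd d) 1)
    (pl : Measure (Fin K → Rd d)) (hplP : IsProbabilityMeasure pl)
    (hplm : ∀ k, pl.map (fun x => x k) = μs k) :
    Integrable (fun x : Fin K → Rd d =>
      (⨆ i, ⨆ j, |(inner ℝ (θ : Rd d) (x i) : ℝ) - inner ℝ (θ : Rd d) (x j)|) ^ p) pl := by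
  haveI : Nonempty (Fin K) := Fin.pos_iff_nonempty.mp hK
  have hp0 : (0:ℝ) ≤ p := le_trans zero_le_one hp
  have hIntk : ∀ k : Fin K, Integrable (fun x : Fin K → Rd d => ‖x k‖ ^ p) pl := by
    intro k
    have h1 : Integrable (fun y : Rd d => ‖y‖ ^ p) (pl.map (fun x => x k)) := by
      rw [hplm k]; exact hμsm k
    have hnrm : Continuous fun y : Rd d => ‖y‖ ^ p :=
      (Real.continuous_rpow_const hp0).comp continuous_norm
    rw [integrable_map_measure hnrm.aestronglyMeasurable
      (measurable_pi_apply k).aemeasurable] at h1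
    exact h1
  have hbound : Integrable (fun x : Fin K → Rd d => 2 ^ p * ∑ k : Fin K, ‖x k‖ ^ p) pl :=
    (integrable_finset_sum Finset.univ fun k _ => hIntk k).const_mul _
  refine hbound.mono' (meas_sup p hp hK θ).aestronglyMeasurable ?_
  refine Filter.Eventually.of_forall fun x => ?_
  have hnn : (0:ℝ) ≤ (⨆ i, ⨆ j, |(inner ℝ (θ : Rd d) (x i) : ℝ) - inner ℝ (θ : Rd d) (x j)|) ^ p :=
    Real.rpow_nonneg (by
      obtain ⟨i⟩ := (inferInstance : Nonempty (Fin K))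
      have hb : ∀ i : Fin K, BddAbove (Set.range fun j : Fin K =>
          |(inner ℝ (θ : Rd d) (x i) : ℝ) - inner ℝ (θ : Rd d) (x j)|) :=
        fun i => (Set.finite_range _).bddAbove
      have hb2 : BddAbove (Set.range fun i : Fin K => ⨆ j : Fin K,
          |(inner ℝ (θ : Rd d) (x i) : ℝ) - inner ℝ (θ : Rd d) (x j)|) :=
        (Set.finite_range _).bddAbove
      exact le_trans (abs_nonneg _) (le_trans (le_ciSup (hb i) i) (le_ciSup hb2 i))) p
  rw [Real.norm_eq_abs, abs_of_nonneg hnn]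
  exact sup_pow_le p hp hK θ x

end Helpers
section Helpers2

variable {d K : ℕ}

/-- Pointwise comparison: the pairwise Wasserstein cost along `θ` is dominated by the
multi-marginal cost along `θ`. -/
private lemma wpp_le_smwtheta (p : ℝ) (hp : 1 ≤ p) (hK : 0 < K)
    (μs : Fin K → Measure (Rd d)) (hμs : ∀ k, IsProbabilityMeasure (μs k))
    (hμsm : ∀ k, FiniteMoment p (μs k)) (i j : Fin K) (θ : sphere (0 : Rd d) 1) :
    Wpp p (proj θ (μs i)) (proj θ (μs j)) ≤ SMWtheta p μs θ := by
  haveI : Nonempty (Fin K) := Fin.pos_iff_nonempty.mp hK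
  have hp0 : (0:ℝ) ≤ p := le_trans zero_le_one hp
  refine le_csInf ⟨_, Set.mem_image_of_mem _ (pi_mem_mcoupling μs hμs)⟩ ?_
  rintro c ⟨pl, ⟨hplP, hplm⟩, rfl⟩
  haveI := hplP
  set T : (Fin K → Rd d) → ℝ × ℝ :=
    fun x => (inner ℝ (θ : Rd d) (x i), inner ℝ (θ : Rd d) (x j)) with hT
  have hinner : ∀ k : Fin K, Measurable fun x : Fin K → Rd d => (inner ℝ (θ : Rd d) (x k) : ℝ) :=
    fun k => (Continuous.inner continuous_const (continuous_apply k)).measurable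
  have hTm : Measurable T := ((hinner i).prodMk (hinner j))
  have hinner1 : Measurable fun y : Rd d => (inner ℝ (θ : Rd d) y : ℝ) :=
    (Continuous.inner continuous_const continuous_id).measurable
  haveI : IsProbabilityMeasure (pl.map T) := Measure.isProbabilityMeasure_map hTm.aemeasurable
  have hmem : pl.map T ∈ Coupling (proj θ (μs i)) (proj θ (μs j)) := by
    refine ⟨inferInstance, ?_, ?_⟩
    · rw [Measure.map_map measurable_fst hTm, proj, ← hplm i,
        Measure.map_map hinner1 (measurable_pi_apply i)]
      rfl
    · rw [Measure.map_map measurable_snd hTm, proj, ← hplm j,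
        Measure.map_map hinner1 (measurable_pi_apply j)]
      rfl
  have hcostc : Continuous fun q : ℝ × ℝ => |q.1 - q.2| ^ p :=
    (Real.continuous_rpow_const hp0).comp ((continuous_fst.sub continuous_snd).abs)
  have hcostm : AEStronglyMeasurable (fun q : ℝ × ℝ => |q.1 - q.2| ^ p) (pl.map T) :=
    hcostc.aestronglyMeasurable
  have hWle : Wpp p (proj θ (μs i)) (proj θ (μs j)) ≤ ∫ q, |q.1 - q.2| ^ p ∂(pl.map T) := by
    refine csInf_le ⟨0, ?_⟩ (Set.mem_image_of_mem _ hmem)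
    rintro c ⟨γ, _, rfl⟩
    exact integral_nonneg fun q => Real.rpow_nonneg (abs_nonneg _) p
  refine hWle.trans ?_
  rw [integral_map hTm.aemeasurable hcostm]
  refine integral_mono_of_nonneg (Filter.Eventually.of_forall fun x =>
      Real.rpow_nonneg (abs_nonneg _) p)
    (integrable_sup_pow p hp hK μs hμs hμsm θ pl hplP hplm)
    (Filter.Eventually.of_forall fun x => ?_)
  simp only [hT]
  refine Real.rpow_le_rpow (abs_nonneg _) ?_ hp0
  have hb : BddAbove (Set.range fun j' : Fin K =>
      |(inner ℝ (θ : Rd d) (x i) : ℝ) - inner ℝ (θ : Rd d) (x j')|) := (Set.finite_range _).bddAbove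
  have hb2 : BddAbove (Set.range fun i' : Fin K => ⨆ j' : Fin K,
      |(inner ℝ (θ : Rd d) (x i') : ℝ) - inner ℝ (θ : Rd d) (x j')|) := (Set.finite_range _).bddAbove
  exact le_trans (le_ciSup hb j) (le_ciSup hb2 i)

private lemma smwtheta_nonneg (p : ℝ) (μs : Fin K → Measure (Rd d))
    (θ : sphere (0 : Rd d) 1) : 0 ≤ SMWtheta p μs θ :=
  Real.sInf_nonneg (smw_set_nonneg p μs θ)

/-- Uniform upper bound for `SMWtheta`. -/
private lemma smwtheta_le_const (p : ℝ) (hp : 1 ≤ p) (hK : 0 < K)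
    (μs : Fin K → Measure (Rd d)) (hμs : ∀ k, IsProbabilityMeasure (μs k))
    (hμsm : ∀ k, FiniteMoment p (μs k)) (θ : sphere (0 : Rd d) 1) :
    SMWtheta p μs θ ≤ 2 ^ p * ∑ k : Fin K, ∫ y, ‖y‖ ^ p ∂(μs k) := by
  haveI := hμs
  haveI : Nonempty (Fin K) := Fin.pos_iff_nonempty.mp hK
  have hp0 : (0:ℝ) ≤ p := le_trans zero_le_one hp
  have hpl := pi_mem_mcoupling μs hμs
  set pl := Measure.pi μs with hpldef
  have h1 : SMWtheta p μs θ
      ≤ ∫ x, (⨆ i, ⨆ j, |(inner ℝ (θ : Rd d) (x i) : ℝ) - inner ℝ (θ : Rd d) (x j)|) ^ p ∂pl :=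
    csInf_le ⟨0, smw_set_nonneg p μs θ⟩ (Set.mem_image_of_mem _ hpl)
  refine h1.trans ?_
  have hIntk : ∀ k : Fin K, Integrable (fun x : Fin K → Rd d => ‖x k‖ ^ p) pl := by
    intro k
    have h1 : Integrable (fun y : Rd d => ‖y‖ ^ p) (pl.map (fun x => x k)) := by
      rw [hpl.2 k]; exact hμsm k
    have hnrm : Continuous fun y : Rd d => ‖y‖ ^ p :=
      (Real.continuous_rpow_const hp0).comp continuous_norm
    rw [integrable_map_measure hnrm.aestronglyMeasurable
      (measurable_pi_apply k).aemeasurable] at h1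
    exact h1
  have h2 : ∫ x, (⨆ i, ⨆ j, |(inner ℝ (θ : Rd d) (x i) : ℝ) - inner ℝ (θ : Rd d) (x j)|) ^ p ∂pl
      ≤ ∫ x, 2 ^ p * ∑ k : Fin K, ‖x k‖ ^ p ∂pl := by
    refine integral_mono_of_nonneg (Filter.Eventually.of_forall fun x =>
        Real.rpow_nonneg ?_ p)
      ((integrable_finset_sum Finset.univ fun k _ => hIntk k).const_mul _)
      (Filter.Eventually.of_forall fun x => sup_pow_le p hp hK θ x)
    obtain ⟨i⟩ := (inferInstance : Nonempty (Fin K))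
    have hb : ∀ i : Fin K, BddAbove (Set.range fun j : Fin K =>
        |(inner ℝ (θ : Rd d) (x i) : ℝ) - inner ℝ (θ : Rd d) (x j)|) :=
      fun i => (Set.finite_range _).bddAbove
    have hb2 : BddAbove (Set.range fun i : Fin K => ⨆ j : Fin K,
        |(inner ℝ (θ : Rd d) (x i) : ℝ) - inner ℝ (θ : Rd d) (x j)|) :=
      (Set.finite_range _).bddAbove
    exact le_trans (abs_nonneg _) (le_trans (le_ciSup (hb i) i) (le_ciSup hb2 i))
  refine h2.trans ?_
  rw [integral_const_mul, integral_finset_sum Finset.univ fun k _ => hIntk k]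
  refine le_of_eq ?_
  congr 1
  refine Finset.sum_congr rfl fun k _ => ?_
  have hnrm : Continuous fun y : Rd d => ‖y‖ ^ p :=
    (Real.continuous_rpow_const hp0).comp continuous_norm
  rw [← hpl.2 k, integral_map (measurable_pi_apply k).aemeasurable hnrm.aestronglyMeasurable]

/-- `SMWtheta` is upper semicontinuous, hence measurable. -/
private lemma smwtheta_usc (p : ℝ) (hp : 1 ≤ p) (hK : 0 < K)
    (μs : Fin K → Measure (Rd d)) (hμs : ∀ k, IsProbabilityMeasure (μs k))
    (hμsm : ∀ k, FiniteMoment p (μs k)) :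
    UpperSemicontinuous (SMWtheta p μs) := by
  haveI : Nonempty (Fin K) := Fin.pos_iff_nonempty.mp hK
  have hp0 : (0:ℝ) ≤ p := le_trans zero_le_one hp
  intro θ y hy
  obtain ⟨c, hc, hcy⟩ := exists_lt_of_csInf_lt
    ⟨_, Set.mem_image_of_mem _ (pi_mem_mcoupling μs hμs)⟩ hy
  obtain ⟨pl, hpl, rfl⟩ := hc
  obtain ⟨hplP, hplm⟩ := hpl
  haveI := hplP
  have hIntk : ∀ k : Fin K, Integrable (fun x : Fin K → Rd d => ‖x k‖ ^ p) pl := by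
    intro k
    have h1 : Integrable (fun y : Rd d => ‖y‖ ^ p) (pl.map (fun x => x k)) := by
      rw [hplm k]; exact hμsm k
    have hnrm : Continuous fun y : Rd d => ‖y‖ ^ p :=
      (Real.continuous_rpow_const hp0).comp continuous_norm
    rw [integrable_map_measure hnrm.aestronglyMeasurable
      (measurable_pi_apply k).aemeasurable] at h1
    exact h1
  have hcont : Continuous (fun θ' : sphere (0 : Rd d) 1 =>
      ∫ x, (⨆ i, ⨆ j, |(inner ℝ (θ' : Rd d) (x i) : ℝ) - inner ℝ (θ' : Rd d) (x j)|) ^ p ∂pl) := by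
    refine continuous_of_dominated
      (fun θ' => (meas_sup p hp hK θ').aestronglyMeasurable)
      (fun θ' => Filter.Eventually.of_forall fun x => ?_)
      ((integrable_finset_sum Finset.univ fun k _ => hIntk k).const_mul ((2:ℝ) ^ p))
      (Filter.Eventually.of_forall fun x => ?_)
    · have hnn : (0:ℝ) ≤ (⨆ i, ⨆ j, |(inner ℝ (θ' : Rd d) (x i) : ℝ) - inner ℝ (θ' : Rd d) (x j)|) ^ p := by
        refine Real.rpow_nonneg ?_ p
        obtain ⟨i⟩ := (inferInstance : Nonempty (Fin K))
        have hb : ∀ i : Fin K, BddAbove (Set.range fun j : Fin K =>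
            |(inner ℝ (θ' : Rd d) (x i) : ℝ) - inner ℝ (θ' : Rd d) (x j)|) :=
          fun i => (Set.finite_range _).bddAbove
        have hb2 : BddAbove (Set.range fun i : Fin K => ⨆ j : Fin K,
            |(inner ℝ (θ' : Rd d) (x i) : ℝ) - inner ℝ (θ' : Rd d) (x j)|) :=
          (Set.finite_range _).bddAbove
        exact le_trans (abs_nonneg _) (le_trans (le_ciSup (hb i) i) (le_ciSup hb2 i))
      rw [Real.norm_eq_abs, abs_of_nonneg hnn]
      exact sup_pow_le p hp hK θ' x
    · have heq : (fun θ' : sphere (0 : Rd d) 1 =>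
          ⨆ i, ⨆ j, |(inner ℝ (θ' : Rd d) (x i) : ℝ) - inner ℝ (θ' : Rd d) (x j)|)
          = fun θ' : sphere (0 : Rd d) 1 => Finset.univ.sup' Finset.univ_nonempty (fun i =>
              Finset.univ.sup' Finset.univ_nonempty (fun j =>
                |(inner ℝ (θ' : Rd d) (x i) : ℝ) - inner ℝ (θ' : Rd d) (x j)|)) := by
        funext θ'
        simp only [Finset.sup'_univ_eq_ciSup]
      have hsc : Continuous (fun θ' : sphere (0 : Rd d) 1 =>
          ⨆ i, ⨆ j, |(inner ℝ (θ' : Rd d) (x i) : ℝ) - inner ℝ (θ' : Rd d) (x j)|) := by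
        rw [heq]
        refine Continuous.finset_sup'_apply _ fun i _ => ?_
        refine Continuous.finset_sup'_apply _ fun j _ => ?_
        have hci : ∀ k : Fin K, Continuous fun θ' : sphere (0 : Rd d) 1 =>
            (inner ℝ (θ' : Rd d) (x k) : ℝ) :=
          fun k => Continuous.inner continuous_subtype_val continuous_const
        exact ((hci i).sub (hci j)).abs
      exact (Real.continuous_rpow_const hp0).comp hsc
  have hopen : IsOpen {θ' : sphere (0 : Rd d) 1 |
      (∫ x, (⨆ i, ⨆ j, |(inner ℝ (θ' : Rd d) (x i) : ℝ) - inner ℝ (θ' : Rd d) (x j)|) ^ p ∂pl) < y} :=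
    isOpen_lt hcont continuous_const
  filter_upwards [hopen.mem_nhds hcy] with θ' hθ'
  exact lt_of_le_of_lt
    (csInf_le ⟨0, smw_set_nonneg p μs θ'⟩
      (Set.mem_image_of_mem _ ⟨hplP, hplm⟩)) hθ'

private lemma uniformSphere_finite : IsFiniteMeasure (uniformSphere d) := by
  constructor
  rw [uniformSphere, Measure.smul_apply, smul_eq_mul]
  exact lt_of_le_of_lt (ENNReal.inv_mul_le_one _) ENNReal.one_lt_top

end Helpers2
/-- The sliced multi-marginal Wasserstein cost with the maximal ground metric
dominates the largest pairwise sliced Wasserstein cost among the marginals. -/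
theorem smw_ge_max_sw (p : ℝ) (hp : 1 ≤ p) (d : ℕ) (hd : 1 ≤ d)
    (K : ℕ) (hK : 2 ≤ K) (μs : Fin K → Measure (Rd d))
    (hμs : ∀ k, IsProbabilityMeasure (μs k)) (hμsm : ∀ k, FiniteMoment p (μs k))
    (hmeas : ∀ i j, Measurable fun θ : sphere (0 : Rd d) 1 =>
      Wpp p (proj θ (μs i)) (proj θ (μs j)))
    (hint : ∀ i j, Integrable (fun θ => Wpp p (proj θ (μs i)) (proj θ (μs j)))
      (uniformSphere d)) :
    (⨆ i, ⨆ j, SWpp p (μs i) (μs j)) ≤ SMWpp p μs := by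
  haveI : Nonempty (Fin K) := Fin.pos_iff_nonempty.mp (by omega)
  haveI := uniformSphere_finite (d := d)
  have hK0 : 0 < K := by omega
  have hC : Integrable (SMWtheta p μs) (uniformSphere d) := by
    refine Integrable.mono' (integrable_const (2 ^ p * ∑ k : Fin K, ∫ y, ‖y‖ ^ p ∂(μs k)))
      ((smwtheta_usc p hp hK0 μs hμs hμsm).measurable.aestronglyMeasurable)
      (Filter.Eventually.of_forall fun θ => ?_)
    rw [Real.norm_eq_abs, abs_of_nonneg (smwtheta_nonneg p μs θ)]
    exact smwtheta_le_const p hp hK0 μs hμs hμsm θ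
  refine ciSup_le fun i => ciSup_le fun j => ?_
  exact integral_mono_of_nonneg (Filter.Eventually.of_forall fun θ => wpp_nonneg p _ _) hC
    (Filter.Eventually.of_forall fun θ => wpp_le_smwtheta p hp hK0 μs hμs hμsm i j θ)
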